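/- Fix a constant 0<α<1/100. There exists a constant C depending only on α such that for all T≥2 and every real t satisfying |t|≤T^{1−α} or |t|≥2T−T^{1−α}, one has |H(t)·W(t)| ≤ C·T^{−100}. -/

import Mathlib

/-- The weight function H(t) from Watson's formula. -/
noncomputable def Hwt (T t : ℝ) : ℝ :=
  ‖Complex.Gamma ((1 / 2 + 2 * (T : ℂ) * Complex.I + (t : ℂ) * Complex.I) / 2)‖ ^ 2 *
      ‖Complex.Gamma ((1 / 2 + 2 * (T : ℂ) * Complex.I - (t : ℂ) * Complex.I) / 2)‖ ^ 2 *
      ‖Complex.Gamma ((1 / 2 + (t : ℂ) * Complex.I) / 2)‖ ^ 4 /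
    (‖Complex.Gamma ((1 + 2 * (T : ℂ) * Complex.I) / 2)‖ ^ 4 *
      ‖Complex.Gamma ((1 + 2 * (t : ℂ) * Complex.I) / 2)‖ ^ 2)

/-- The smooth cutoff W(t) = W_α(t). -/
noncomputable def Wwt (α T t : ℝ) : ℝ :=
  (1 - Real.exp (-(t / (2 * T) ^ (1 - α / 2)) ^ (2 * ⌈(1000 : ℝ) / α⌉₊))) *
    (1 - Real.exp (-((4 * T ^ 2 - t ^ 2) / (4 * T ^ (2 - α / 2))) ^ (2 * ⌈(1000 : ℝ) / α⌉₊)))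

section AuxLemmas

open Real Complex



noncomputable def K0 : ℝ := ∫ x in (0:ℝ)..1, x ^ (-(3/4) : ℝ) * (1-x) ^ (-(1/2) : ℝ)

noncomputable def Mc : ℝ := 4 * |K0| * Real.sqrt π

lemma beta_abs (u : ℝ) :
    ‖Complex.betaIntegral (1/4 + u * Complex.I) (1/2)‖ ≤ |K0| := by
  rw [Complex.betaIntegral]
  refine le_trans (intervalIntegral.norm_integral_le_abs_integral_norm) ?_
  have : (∫ x in (0:ℝ)..1, ‖(x:ℂ) ^ (1/4 + u * Complex.I - 1) * (1 - (x:ℂ)) ^ ((1:ℂ)/2 - 1)‖)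
      = K0 := by
    refine intervalIntegral.integral_congr fun x hx => ?_
    rw [Set.uIcc_of_le (by norm_num : (0:ℝ) ≤ 1)] at hx
    obtain ⟨hx0, hx1⟩ := hx
    rw [norm_mul]
    congr 1
    · rcases eq_or_lt_of_le hx0 with h | h
      · rw [← h]
        rw [Complex.ofReal_zero, Complex.zero_cpow (by
          intro hc
          have := congrArg Complex.re hc
          simp at this
          norm_num at this), Real.zero_rpow (by norm_num)]
        simp
      · rw [Complex.norm_cpow_eq_rpow_re_of_pos h]
        congr 1
        simp
        norm_num
    · rcases eq_or_lt_of_le hx1 with h | h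
      · rw [h]
        rw [(by push_cast; ring : (1 : ℂ) - (1:ℝ) = ((0:ℝ):ℂ))]
        rw [Complex.ofReal_zero, Complex.zero_cpow (by
          intro hc
          have := congrArg Complex.re hc
          simp at this
          norm_num at this)]
        rw [(by norm_num : (1:ℝ)-1 = 0), Real.zero_rpow (by norm_num)]
        simp
      · rw [(by push_cast; ring : (1 : ℂ) - (x:ℝ) = ((1-x:ℝ):ℂ))]
        rw [Complex.norm_cpow_eq_rpow_re_of_pos (by linarith)]
        congr 1
        simp
        norm_num
  rw [this]



lemma gamma_half_line (u : ℝ) :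
    ‖Complex.Gamma (1/2 + u * Complex.I)‖ ^ 2 = π / Real.cosh (π * u) := by
  have h1 : (1 : ℂ) - (1/2 + u * Complex.I) = (starRingEnd ℂ) (1/2 + u * Complex.I) := by
    simp [Complex.ext_iff]; ring
  have h2 := Complex.Gamma_mul_Gamma_one_sub (1/2 + u * Complex.I)
  rw [h1, Complex.Gamma_conj, Complex.mul_conj] at h2
  have h3 : Complex.sin (π * (1/2 + u * Complex.I)) = (Real.cosh (π * u) : ℂ) := by
    have h : (π : ℂ) * (1/2 + u * Complex.I) = π/2 + (π * u : ℝ) * Complex.I := by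
      push_cast; ring
    rw [h, Complex.sin_add, Complex.sin_pi_div_two, Complex.cos_pi_div_two]
    rw [Complex.cos_mul_I]
    simp [Complex.ofReal_cosh]
  rw [h3, Complex.normSq_eq_norm_sq] at h2
  have h5 : ((‖Complex.Gamma (1/2 + u * Complex.I)‖ ^ 2 : ℝ) : ℂ)
      = ((π / Real.cosh (π * u) : ℝ) : ℂ) := by
    rw [h2]; push_cast; ring
  exact_mod_cast h5



lemma abs_gamma_half : ‖Complex.Gamma (1/2)‖ = Real.sqrt π := by
  rw [Complex.Gamma_one_half_eq, Complex.norm_cpow_eq_rpow_re_of_pos Real.pi_pos]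
  rw [(by simp : ((1:ℂ)/2).re = (1/2 : ℝ)), Real.sqrt_eq_rpow]

lemma gamma_ratio (u : ℝ) :
    ‖Complex.Gamma (1/4 + u * Complex.I)‖ * Real.sqrt π
      ≤ |K0| * ‖Complex.Gamma (3/4 + u * Complex.I)‖ := by
  have h := Complex.Gamma_mul_Gamma_eq_betaIntegral
    (s := 1/4 + u * Complex.I) (t := 1/2) (by simp) (by norm_num)
  have h2 : (1:ℂ)/4 + u * Complex.I + 1/2 = 3/4 + u * Complex.I := by ring
  rw [h2] at h
  have := congrArg (‖·‖) h
  rw [norm_mul, norm_mul, abs_gamma_half] at this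
  rw [this, mul_comm (|K0|)]
  refine mul_le_mul_of_nonneg_left (beta_abs u) (norm_nonneg _)

lemma sin_lower (u : ℝ) :
    Real.exp (π * |u|) / 4 ≤ ‖Complex.sin (π * (1/4 + u * Complex.I))‖ := by
  have h : (π:ℂ) * (1/4 + u * Complex.I) = ((π/4 : ℝ):ℂ) + ((π*u : ℝ):ℂ) * Complex.I := by
    push_cast; ring
  rw [h, Complex.sin_add_mul_I]
  have hre : (Complex.sin ((π/4 : ℝ):ℂ) * Complex.cosh ((π*u : ℝ):ℂ)
      + Complex.cos ((π/4 : ℝ):ℂ) * Complex.sinh ((π*u : ℝ):ℂ) * Complex.I).re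
      = Real.sin (π/4) * Real.cosh (π*u) := by
    rw [← Complex.ofReal_sin, ← Complex.ofReal_cosh, ← Complex.ofReal_cos,
      ← Complex.ofReal_sinh, ← Complex.ofReal_mul, ← Complex.ofReal_mul]
    simp only [Complex.add_re, Complex.ofReal_re, Complex.mul_I_re, Complex.ofReal_im, neg_zero,
      add_zero]
  calc Real.exp (π * |u|) / 4
      ≤ Real.sin (π/4) * Real.cosh (π*u) := by
        rw [Real.sin_pi_div_four]
        have hc : Real.exp (|π * u|) / 2 ≤ Real.cosh (π * u) := by
          rw [Real.cosh_eq]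
          have := Real.exp_abs_le (π * u)
          linarith
        have habs : |π * u| = π * |u| := by
          rw [abs_mul, abs_of_pos Real.pi_pos]
        rw [habs] at hc
        have h2 : (1:ℝ)/2 ≤ Real.sqrt 2 / 2 := by
          have : (1:ℝ) ≤ Real.sqrt 2 := by
            rw [show (1:ℝ) = Real.sqrt 1 by simp]
            exact Real.sqrt_le_sqrt (by norm_num)
          linarith
        have hcpos : (0:ℝ) < Real.cosh (π*u) := Real.cosh_pos _
        nlinarith [Real.exp_pos (π * |u|)]
    _ ≤ _ := by
        rw [← hre]
        exact (le_abs_self _).trans (Complex.abs_re_le_norm _)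



lemma Mc_nonneg : 0 ≤ Mc := by
  unfold Mc
  positivity

lemma gamma_quarter (u : ℝ) :
    ‖Complex.Gamma (1/4 + u * Complex.I)‖ ^ 2 ≤ Mc * Real.exp (-(π * |u|)) := by
  have hrefl := Complex.Gamma_mul_Gamma_one_sub (1/4 + u * Complex.I)
  have h1 : (1 : ℂ) - (1/4 + u * Complex.I) = (starRingEnd ℂ) (3/4 + u * Complex.I) := by
    apply Complex.ext <;> simp [map_ofNat] <;> norm_num
  rw [h1, Complex.Gamma_conj] at hrefl
  have habs := congrArg (‖·‖) hrefl
  rw [norm_mul, Complex.norm_conj, norm_div, Complex.norm_real, Real.norm_eq_abs,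
    abs_of_pos Real.pi_pos] at habs
  set A := ‖Complex.Gamma (1/4 + u * Complex.I)‖ with hA
  set B := ‖Complex.Gamma (3/4 + u * Complex.I)‖ with hB
  set S := ‖Complex.sin (π * (1/4 + u * Complex.I))‖ with hS
  have hSpos : 0 < S := lt_of_lt_of_le (by positivity) (sin_lower u)
  have hSinv : π / S ≤ π * (4 * Real.exp (-(π * |u|))) := by
    rw [div_le_iff₀ hSpos]
    have hsl : Real.exp (π * |u|) / 4 ≤ S := hS ▸ sin_lower u
    have he : Real.exp (-(π * |u|)) * Real.exp (π * |u|) = 1 := by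
      rw [← Real.exp_add]; simp
    nlinarith [mul_le_mul_of_nonneg_left hsl
      (mul_pos Real.pi_pos (by positivity : (0:ℝ) < 4 * Real.exp (-(π * |u|)))).le,
      Real.pi_pos]
  have hArat := gamma_ratio u
  have hAnn : 0 ≤ A := norm_nonneg _
  have hsq : A ^ 2 * Real.sqrt π ≤ |K0| * (π / S) := by
    calc A ^ 2 * Real.sqrt π = A * (A * Real.sqrt π) := by ring
    _ ≤ A * (|K0| * B) := by
        exact mul_le_mul_of_nonneg_left hArat hAnn
    _ = |K0| * (A * B) := by ring
    _ = |K0| * (π / S) := by rw [habs]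
  have hsqrtpos : 0 < Real.sqrt π := Real.sqrt_pos.mpr Real.pi_pos
  have hfin : A ^ 2 ≤ |K0| * (π * (4 * Real.exp (-(π * |u|)))) / Real.sqrt π := by
    rw [le_div_iff₀ hsqrtpos]
    calc A^2 * Real.sqrt π ≤ |K0| * (π / S) := hsq
    _ ≤ |K0| * (π * (4 * Real.exp (-(π * |u|)))) :=
        mul_le_mul_of_nonneg_left hSinv (abs_nonneg _)
  refine hfin.trans (le_of_eq ?_)
  unfold Mc
  rw [eq_comm, mul_comm (4 * |K0|) (Real.sqrt π)]
  field_simp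
  have hss : Real.sqrt π * Real.sqrt π = π := Real.mul_self_sqrt Real.pi_pos.le
  linear_combination |K0| * hss



lemma cosh_le_exp_abs (x : ℝ) : Real.cosh x ≤ Real.exp |x| := by
  rw [Real.cosh_eq]
  have h1 : Real.exp x ≤ Real.exp |x| := Real.exp_le_exp.mpr (le_abs_self x)
  have h2 : Real.exp (-x) ≤ Real.exp |x| := Real.exp_le_exp.mpr (neg_le_abs x)
  linarith

lemma Hwt_nonneg (T t : ℝ) : 0 ≤ Hwt T t := by
  unfold Hwt; positivity

lemma Hwt_le (T t : ℝ) (hT : 0 ≤ T) :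
    Hwt T t ≤ Mc ^ 4 / π ^ 3 * Real.exp (2 * π * T - π * max (2 * T) |t|) := by
  have a1 : (1 / 2 + 2 * (T : ℂ) * Complex.I + (t : ℂ) * Complex.I) / 2
      = 1/4 + ((2*T+t)/2 : ℝ) * Complex.I := by push_cast; ring
  have a2 : (1 / 2 + 2 * (T : ℂ) * Complex.I - (t : ℂ) * Complex.I) / 2
      = 1/4 + ((2*T-t)/2 : ℝ) * Complex.I := by push_cast; ring
  have a3 : (1 / 2 + (t : ℂ) * Complex.I) / 2 = 1/4 + ((t/2 : ℝ)) * Complex.I := by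
    push_cast; ring
  have a4 : (1 + 2 * (T : ℂ) * Complex.I) / 2 = 1/2 + (T : ℝ) * Complex.I := by
    push_cast; ring
  have a5 : (1 + 2 * (t : ℂ) * Complex.I) / 2 = 1/2 + (t : ℝ) * Complex.I := by
    push_cast; ring
  have h1 := gamma_quarter ((2*T+t)/2)
  have h2 := gamma_quarter ((2*T-t)/2)
  have h3 := gamma_quarter (t/2)
  have h4 := gamma_half_line T
  have h5 := gamma_half_line t
  unfold Hwt
  rw [a1, a2, a3, a4, a5]
  rw [show (4:ℕ) = 2*2 from rfl, pow_mul, pow_mul, h4, h5]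
  have hden : (0:ℝ) < (π / Real.cosh (π * T)) ^ 2 * (π / Real.cosh (π * t)) := by
    positivity
  have hnum : ‖Complex.Gamma (1/4 + ((2*T+t)/2 : ℝ) * Complex.I)‖ ^ 2 *
      ‖Complex.Gamma (1/4 + ((2*T-t)/2 : ℝ) * Complex.I)‖ ^ 2 *
      (‖Complex.Gamma (1/4 + ((t/2 : ℝ)) * Complex.I)‖ ^ 2) ^ 2
      ≤ Mc * Real.exp (-(π * |(2*T+t)/2|)) * (Mc * Real.exp (-(π * |(2*T-t)/2|))) *
        (Mc * Real.exp (-(π * |t/2|))) ^ 2 := by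
    gcongr <;>
      first
        | exact mul_nonneg Mc_nonneg (Real.exp_pos _).le
        | exact mul_nonneg (mul_nonneg Mc_nonneg (Real.exp_pos _).le)
            (mul_nonneg Mc_nonneg (Real.exp_pos _).le)
        | exact h1 | exact h2 | exact h3
  have d1 : |(2*T+t)/2| = |2*T+t|/2 := by rw [abs_div]; norm_num
  have d2 : |(2*T-t)/2| = |2*T-t|/2 := by rw [abs_div]; norm_num
  have d3 : |t/2| = |t|/2 := by rw [abs_div]; norm_num
  have hm : max (2*T) |t| ≤ (|2*T+t| + |2*T-t|)/2 := by
    apply max_le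
    · nlinarith [le_abs_self (2*T+t), le_abs_self (2*T-t)]
    · have h2t : |(2*T+t) - (2*T-t)| ≤ |2*T+t| + |2*T-t| := abs_sub _ _
      have he : (2*T+t) - (2*T-t) = 2*t := by ring
      rw [he] at h2t
      have : |2*t| = 2*|t| := by rw [abs_mul]; norm_num
      linarith [this ▸ h2t]
  have hc1 : Real.cosh (π*T) ≤ Real.exp (π*T) := by
    have := cosh_le_exp_abs (π*T)
    rwa [_root_.abs_of_nonneg (by positivity : (0:ℝ) ≤ π*T)] at this
  have hc2 : Real.cosh (π*t) ≤ Real.exp (π*|t|) := by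
    have := cosh_le_exp_abs (π*t)
    rwa [(by rw [abs_mul, _root_.abs_of_pos Real.pi_pos] : |π*t| = π*|t|)] at this
  calc ‖Complex.Gamma (1/4 + ((2*T+t)/2 : ℝ) * Complex.I)‖ ^ 2 *
      ‖Complex.Gamma (1/4 + ((2*T-t)/2 : ℝ) * Complex.I)‖ ^ 2 *
      (‖Complex.Gamma (1/4 + ((t/2 : ℝ)) * Complex.I)‖ ^ 2) ^ 2 /
      ((π / Real.cosh (π * T)) ^ 2 * (π / Real.cosh (π * t)))
      ≤ (Mc * Real.exp (-(π * |(2*T+t)/2|)) * (Mc * Real.exp (-(π * |(2*T-t)/2|))) *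
        (Mc * Real.exp (-(π * |t/2|))) ^ 2) /
        ((π / Real.cosh (π * T)) ^ 2 * (π / Real.cosh (π * t))) :=
      (div_le_div_iff_of_pos_right hden).mpr hnum
    _ = Mc ^ (2*2) / π ^ 3 * (Real.exp (-(π * |(2*T+t)/2|) + -(π * |(2*T-t)/2|) +
        (-(π * |t/2|) + -(π * |t/2|))) * (Real.cosh (π*T)^2 * Real.cosh (π*t))) := by
      rw [Real.exp_add, Real.exp_add, Real.exp_add]
      have hcT := Real.cosh_pos (x := π*T)
      have hct := Real.cosh_pos (x := π*t)
      field_simp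
      try ring
    _ ≤ Mc ^ (2*2) / π ^ 3 * (Real.exp (-(π * |(2*T+t)/2|) + -(π * |(2*T-t)/2|) +
        (-(π * |t/2|) + -(π * |t/2|))) * (Real.exp (π*T)^2 * Real.exp (π*|t|))) := by
      refine mul_le_mul_of_nonneg_left ?_
        (div_nonneg (pow_nonneg Mc_nonneg _) (by positivity))
      refine mul_le_mul_of_nonneg_left ?_ (Real.exp_pos _).le
      gcongr <;>
        first
          | exact hc1
          | exact hc2
          | exact (Real.cosh_pos (x := π*T)).le
          | positivity
    _ = Mc ^ (2*2) / π ^ 3 * Real.exp (-(π * |(2*T+t)/2|) + -(π * |(2*T-t)/2|) +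
        (-(π * |t/2|) + -(π * |t/2|)) + (π*T + π*T) + π*|t|) := by
      rw [pow_two, ← Real.exp_add, ← Real.exp_add, ← Real.exp_add]
      congr 1
      ring
    _ ≤ Mc ^ (2*2) / π ^ 3 * Real.exp (2 * π * T - π * max (2 * T) |t|) := by
      refine mul_le_mul_of_nonneg_left ?_
        (div_nonneg (pow_nonneg Mc_nonneg _) (by positivity))
      rw [Real.exp_le_exp, d1, d2, d3]
      have hmm := mul_le_mul_of_nonneg_left hm Real.pi_pos.le
      linarith


end AuxLemmas

section MainProof

open Real



set_option maxHeartbeats 1000000 in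
/-- H(t)W(t) ≪ T^{-100} unless T^{1-α} < |t| < 2T - T^{1-α}. -/
theorem stmt_3 (α : ℝ) (hα0 : 0 < α) (hα1 : α < 1 / 100) :
    ∃ C : ℝ, ∀ T : ℝ, 2 ≤ T → ∀ t : ℝ,
      (|t| ≤ T ^ (1 - α) ∨ 2 * T - T ^ (1 - α) ≤ |t|) →
      |Hwt T t * Wwt α T t| ≤ C * T ^ (-100 : ℝ) := by
  set N : ℕ := ⌈(1000 : ℝ) / α⌉₊ with hNdef
  set C1 : ℝ := Mc ^ 4 / π ^ 3 with hC1def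
  have hC1nn : 0 ≤ C1 := div_nonneg (pow_nonneg Mc_nonneg _) (by positivity)
  set C : ℝ := C1 * ((5/4 : ℝ) ^ (2*N) + (Nat.factorial 200 : ℝ) + 1) with hCdef
  have hfact_nn : (0:ℝ) ≤ (Nat.factorial 200 : ℝ) := by positivity
  have hpow_nn : (0:ℝ) ≤ (5/4 : ℝ) ^ (2*N) := by positivity
  have hpow_ge1 : (1:ℝ) ≤ (5/4 : ℝ) ^ (2*N) := one_le_pow₀ (by norm_num)
  refine ⟨C, ?_⟩
  intro T hT t ht
  have hT0 : (0:ℝ) < T := by linarith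
  have hT1 : (1:ℝ) ≤ T := by linarith
  have hαN : (1000:ℝ) ≤ α * N := by
    have h := Nat.le_ceil ((1000 : ℝ) / α)
    rw [← hNdef] at h
    calc (1000:ℝ) = α * (1000/α) := by field_simp
    _ ≤ α * N := mul_le_mul_of_nonneg_left h hα0.le
  -- generic power computations
  have hTexp : ∀ c : ℝ, (T ^ c) ^ (2*N) = T ^ (c * ((2*N : ℕ) : ℝ)) := by
    intro c
    rw [← Real.rpow_natCast (T ^ c) (2*N), ← Real.rpow_mul hT0.le]
  have hTle100 : T ^ (-(α/2) * ((2*N : ℕ) : ℝ)) ≤ T ^ (-100 : ℝ) := by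
    apply Real.rpow_le_rpow_of_exponent_le hT1
    push_cast
    nlinarith
  have hTpow1 : T ^ (1-α) ≤ T := by
    calc T ^ (1-α) ≤ T ^ (1:ℝ) := Real.rpow_le_rpow_of_exponent_le hT1 (by linarith)
    _ = T := Real.rpow_one T
  have hTpownn : (0:ℝ) < T ^ (1-α) := Real.rpow_pos_of_pos hT0 _
  -- W factor generalities
  set x1 : ℝ := (t / (2 * T) ^ (1 - α / 2)) ^ (2*N) with hx1def
  set x2 : ℝ := ((4 * T ^ 2 - t ^ 2) / (4 * T ^ (2 - α / 2))) ^ (2*N) with hx2def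
  have hevenN : Even (2*N) := even_two_mul N
  have hx1nn : 0 ≤ x1 := hevenN.pow_nonneg _
  have hx2nn : 0 ≤ x2 := hevenN.pow_nonneg _
  have hf1nn : 0 ≤ 1 - Real.exp (-x1) := by
    have := Real.exp_le_one_iff.mpr (neg_nonpos.mpr hx1nn)
    linarith
  have hf2nn : 0 ≤ 1 - Real.exp (-x2) := by
    have := Real.exp_le_one_iff.mpr (neg_nonpos.mpr hx2nn)
    linarith
  have hf1le1 : 1 - Real.exp (-x1) ≤ 1 := by linarith [Real.exp_pos (-x1)]
  have hf2le1 : 1 - Real.exp (-x2) ≤ 1 := by linarith [Real.exp_pos (-x2)]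
  have hf1lex : 1 - Real.exp (-x1) ≤ x1 := by linarith [Real.add_one_le_exp (-x1)]
  have hf2lex : 1 - Real.exp (-x2) ≤ x2 := by linarith [Real.add_one_le_exp (-x2)]
  have hWnn : 0 ≤ Wwt α T t := by
    rw [Wwt, ← hNdef, ← hx1def, ← hx2def]
    exact mul_nonneg hf1nn hf2nn
  have habs : |Hwt T t * Wwt α T t| = Hwt T t * Wwt α T t :=
    abs_of_nonneg (mul_nonneg (Hwt_nonneg T t) hWnn)
  have hHC1 : Hwt T t ≤ C1 * Real.exp (2 * π * T - π * max (2 * T) |t|) := Hwt_le T t hT0.le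
  have hHle : Hwt T t ≤ C1 := by
    refine hHC1.trans ?_
    have : Real.exp (2 * π * T - π * max (2 * T) |t|) ≤ 1 := by
      rw [Real.exp_le_one_iff]
      nlinarith [le_max_left (2*T) |t|, Real.pi_pos]
    nlinarith
  have hfinal : ∀ c0 : ℝ, 0 ≤ c0 → c0 ≤ (5/4 : ℝ) ^ (2*N) + (Nat.factorial 200 : ℝ) + 1 →
      Hwt T t * Wwt α T t ≤ C1 * c0 * T ^ (-100 : ℝ) →
      |Hwt T t * Wwt α T t| ≤ C * T ^ (-100 : ℝ) := by
    intro c0 hc0 hc0le hb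
    rw [habs]
    refine hb.trans ?_
    have h100 : (0:ℝ) ≤ T ^ (-100 : ℝ) := (Real.rpow_pos_of_pos hT0 _).le
    refine mul_le_mul_of_nonneg_right ?_ h100
    rw [hCdef]
    exact mul_le_mul_of_nonneg_left hc0le hC1nn
  rcases ht with ht1 | ht2
  · -- case A : |t| small
    have hbase : |t / (2 * T) ^ (1 - α / 2)| ≤ T ^ (-(α/2)) := by
      rw [abs_div, _root_.abs_of_nonneg (Real.rpow_nonneg (by linarith) _)]
      have hTle2T : T ^ ((1:ℝ) - α/2) ≤ (2*T) ^ ((1:ℝ) - α/2) :=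
        Real.rpow_le_rpow hT0.le (by linarith) (by linarith)
      have hp2 : (0:ℝ) < T ^ ((1:ℝ) - α/2) := Real.rpow_pos_of_pos hT0 _
      calc |t| / (2*T) ^ (1 - α/2) ≤ |t| / T ^ ((1:ℝ) - α/2) := by
            gcongr
        _ ≤ T ^ (1-α) / T ^ ((1:ℝ) - α/2) := by
            gcongr
        _ = T ^ (-(α/2)) := by
            rw [← Real.rpow_sub hT0]
            congr 1
            ring
    have hx1le : x1 ≤ T ^ (-100 : ℝ) := by
      calc x1 = |t / (2 * T) ^ (1 - α / 2)| ^ (2*N) := (hevenN.pow_abs _).symm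
      _ ≤ (T ^ (-(α/2))) ^ (2*N) := pow_le_pow_left₀ (abs_nonneg _) hbase _
      _ = T ^ (-(α/2) * ((2*N : ℕ) : ℝ)) := hTexp _
      _ ≤ T ^ (-100 : ℝ) := hTle100
    refine hfinal 1 (by norm_num) (by linarith) ?_
    rw [mul_one]
    have hWle : Wwt α T t ≤ T ^ (-100 : ℝ) := by
      rw [Wwt, ← hNdef, ← hx1def, ← hx2def]
      calc (1 - Real.exp (-x1)) * (1 - Real.exp (-x2)) ≤ x1 * 1 :=
        mul_le_mul hf1lex hf2le1 hf2nn hx1nn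
      _ = x1 := mul_one _
      _ ≤ _ := hx1le
    exact mul_le_mul hHle hWle hWnn hC1nn
  · by_cases htu : |t| ≤ 2*T + T ^ (1-α)
    · -- case B : |t| near 2T
      have hmid : abs (2*T - |t|) ≤ T ^ (1-α) := abs_le.mpr ⟨by linarith, by linarith⟩
      have hfac : |4 * T ^ 2 - t ^ 2| ≤ 5 * T ^ ((2:ℝ)-α) := by
        have hprod : 4 * T ^ 2 - t ^ 2 = (2*T - |t|) * (2*T + |t|) := by
          have := sq_abs t
          nlinarith
        rw [hprod, abs_mul, _root_.abs_of_nonneg (by positivity : (0:ℝ) ≤ 2*T + |t|)]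
        have h2T : 2*T + |t| ≤ 5*T := by
          have := hTpow1
          linarith
        have hT2a : T ^ (1-α) * T = T ^ ((2:ℝ)-α) := by
          nth_rewrite 2 [← Real.rpow_one T]
          rw [← Real.rpow_add hT0]
          congr 1
          ring
        calc abs (2*T - |t|) * (2*T + |t|) ≤ T ^ (1-α) * (5*T) :=
          mul_le_mul hmid h2T (by positivity) hTpownn.le
        _ = 5 * (T ^ (1-α) * T) := by ring
        _ = 5 * T ^ ((2:ℝ)-α) := by rw [hT2a]
      have hbase2 : |(4 * T ^ 2 - t ^ 2) / (4 * T ^ (2 - α / 2))| ≤ 5/4 * T ^ (-(α/2)) := by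
        have hp2 : (0:ℝ) < T ^ ((2:ℝ) - α/2) := Real.rpow_pos_of_pos hT0 _
        rw [abs_div, _root_.abs_of_pos (by positivity : (0:ℝ) < 4 * T ^ (2 - α/2))]
        rw [div_le_iff₀ (by positivity : (0:ℝ) < 4 * T ^ (2 - α/2))]
        have heq : 5/4 * T ^ (-(α/2)) * (4 * T ^ (2 - α/2)) = 5 * T ^ ((2:ℝ)-α) := by
          rw [show (5:ℝ)/4 * T ^ (-(α/2)) * (4 * T ^ (2 - α/2)) =
            5 * (T ^ (-(α/2)) * T ^ (2 - α/2)) by ring, ← Real.rpow_add hT0]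
          congr 2
          ring
        rw [heq]
        exact hfac
      have hx2le : x2 ≤ (5/4 : ℝ) ^ (2*N) * T ^ (-100 : ℝ) := by
        calc x2 = |(4 * T ^ 2 - t ^ 2) / (4 * T ^ (2 - α / 2))| ^ (2*N) :=
            (hevenN.pow_abs _).symm
        _ ≤ (5/4 * T ^ (-(α/2))) ^ (2*N) := pow_le_pow_left₀ (abs_nonneg _) hbase2 _
        _ = (5/4 : ℝ) ^ (2*N) * (T ^ (-(α/2))) ^ (2*N) := mul_pow _ _ _
        _ ≤ (5/4 : ℝ) ^ (2*N) * T ^ (-100 : ℝ) := by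
            rw [hTexp]
            exact mul_le_mul_of_nonneg_left hTle100 hpow_nn
      refine hfinal ((5/4 : ℝ) ^ (2*N)) hpow_nn (by linarith) ?_
      have hWle : Wwt α T t ≤ (5/4 : ℝ) ^ (2*N) * T ^ (-100 : ℝ) := by
        rw [Wwt, ← hNdef, ← hx1def, ← hx2def]
        calc (1 - Real.exp (-x1)) * (1 - Real.exp (-x2)) ≤ 1 * x2 :=
          mul_le_mul hf1le1 hf2lex hf2nn (by norm_num)
        _ = x2 := one_mul _
        _ ≤ _ := hx2le
      calc Hwt T t * Wwt α T t ≤ C1 * ((5/4 : ℝ) ^ (2*N) * T ^ (-100 : ℝ)) :=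
        mul_le_mul hHle hWle hWnn hC1nn
      _ = C1 * (5/4 : ℝ) ^ (2*N) * T ^ (-100 : ℝ) := by ring
    · -- case C : |t| large
      push_neg at htu
      have h2T : 2*T ≤ |t| := by linarith
      have hHexp : Hwt T t ≤ C1 * Real.exp (-(T ^ (1-α))) := by
        refine hHC1.trans ?_
        refine mul_le_mul_of_nonneg_left ?_ hC1nn
        rw [Real.exp_le_exp, max_eq_right h2T]
        nlinarith [Real.pi_gt_three]
      have hexp_le : Real.exp (-(T ^ (1-α))) ≤ (Nat.factorial 200 : ℝ) * T ^ (-100 : ℝ) := by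
        have hkey : T ^ (100:ℝ) / (Nat.factorial 200 : ℝ) ≤ Real.exp (T ^ (1-α)) := by
          calc T ^ (100:ℝ) / (Nat.factorial 200 : ℝ)
              ≤ (T ^ (1-α)) ^ (200 : ℕ) / (Nat.factorial 200 : ℝ) := by
                apply div_le_div_of_nonneg_right ?_ (by positivity)
                rw [← Real.rpow_natCast (T ^ (1-α)) 200, ← Real.rpow_mul hT0.le]
                apply Real.rpow_le_rpow_of_exponent_le hT1
                push_cast
                nlinarith
            _ ≤ Real.exp (T ^ (1-α)) := Real.pow_div_factorial_le_exp _ hTpownn.le 200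
        have hpos : (0:ℝ) < T ^ (100:ℝ) / (Nat.factorial 200 : ℝ) := by positivity
        rw [Real.exp_neg, Real.rpow_neg hT0.le]
        calc (Real.exp (T ^ (1-α)))⁻¹ ≤ (T ^ (100:ℝ) / (Nat.factorial 200 : ℝ))⁻¹ := by
              apply inv_anti₀ hpos hkey
          _ = (Nat.factorial 200 : ℝ) * (T ^ (100:ℝ))⁻¹ := by
              rw [inv_div]
              ring
      refine hfinal (Nat.factorial 200 : ℝ) hfact_nn (by linarith) ?_
      have hW1 : Wwt α T t ≤ 1 := by
        rw [Wwt, ← hNdef, ← hx1def, ← hx2def]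
        calc (1 - Real.exp (-x1)) * (1 - Real.exp (-x2)) ≤ 1 * 1 :=
            mul_le_mul hf1le1 hf2le1 hf2nn (by norm_num)
          _ = 1 := mul_one _
      calc Hwt T t * Wwt α T t ≤ (C1 * Real.exp (-(T ^ (1-α)))) * 1 :=
          mul_le_mul hHexp hW1 hWnn (mul_nonneg hC1nn (Real.exp_pos _).le)
        _ = C1 * Real.exp (-(T ^ (1-α))) := mul_one _
        _ ≤ C1 * ((Nat.factorial 200 : ℝ) * T ^ (-100 : ℝ)) :=
          mul_le_mul_of_nonneg_left hexp_le hC1nn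
        _ = C1 * (Nat.factorial 200 : ℝ) * T ^ (-100 : ℝ) := by ring


end MainProof
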